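/- arXiv:2412.20945 — 2 statements merged into one kernel-verified Lean document; each statement's English description precedes it below -/
import Mathlib

section
/- Let V be an n × n integer matrix, b an n × 1 integer column vector, and let W be the (n+2) × (n+2) column-type elementary enlargement of V, i.e. the block matrix W = [[V, b, 0], [0, 0, 1], [0, 0, 0]]. Then det(W − t·Wᵀ) = t·det(V − t·Vᵀ) as polynomials in t. In particular, for either type of elementary enlargement W of V one has det(W − t·Wᵀ) = ±t·det(V − t·Vᵀ). -/
open Matrix

/-- The matrix `V - t·Vᵀ` with entries in `ℤ[t]`, associated to a square integer matrix. -/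
noncomputable def alexMat {n : Type*} [Fintype n] (V : Matrix n n ℤ) :
    Matrix n n (Polynomial ℤ) :=
  V.map Polynomial.C - (Polynomial.X : Polynomial ℤ) • (Vᵀ.map Polynomial.C)

/-- The row-type elementary enlargement `W = [[V, 0, 0], [a, 0, 0], [0, 1, 0]]`. -/
def rowEnlarge {n : ℕ} (V : Matrix (Fin n) (Fin n) ℤ) (a : Fin n → ℤ) :
    Matrix (Fin n ⊕ Fin 2) (Fin n ⊕ Fin 2) ℤ :=
  Matrix.fromBlocks V 0
    (Matrix.of fun (i : Fin 2) (j : Fin n) => if i = 0 then a j else 0)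
    !![0, 0; 1, 0]

/-- The column-type elementary enlargement `W = [[V, b, 0], [0, 0, 1], [0, 0, 0]]` of an
`n × n` integer matrix `V` by a column vector `b`. -/
def colEnlarge {n : ℕ} (V : Matrix (Fin n) (Fin n) ℤ) (b : Fin n → ℤ) :
    Matrix (Fin n ⊕ Fin 2) (Fin n ⊕ Fin 2) ℤ :=
  Matrix.fromBlocks V
    (Matrix.of fun (i : Fin n) (j : Fin 2) => if j = 0 then b i else 0)
    0
    !![0, 1; 0, 0]

lemma alexMat_transpose {n : Type*} [Fintype n] (V : Matrix n n ℤ) :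
    alexMat Vᵀ = (alexMat V)ᵀ := by
  simp [alexMat, transpose_sub, transpose_smul, transpose_map]

lemma key {n : ℕ} (V : Matrix (Fin n) (Fin n) ℤ) (b : Fin n → ℤ) :
    (alexMat (colEnlarge V b)).det = Polynomial.X * (alexMat V).det := by
  set A := alexMat V with hA
  set B' : Matrix (Fin n) (Fin 2) (Polynomial ℤ) :=
    Matrix.of fun i j => if j = 0 then Polynomial.C (b i) else 0 with hB
  set C' : Matrix (Fin 2) (Fin n) (Polynomial ℤ) :=
    Matrix.of fun i j => if i = 0 then -(Polynomial.X * Polynomial.C (b j)) else 0 with hC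
  set D' : Matrix (Fin 2) (Fin 2) (Polynomial ℤ) := !![0, 1; -Polynomial.X, 0] with hD
  have hM : alexMat (colEnlarge V b) = fromBlocks A B' C' D' := by
    refine Matrix.ext fun i j => ?_
    rcases i with i | i <;> rcases j with j | j
    · simp [alexMat, colEnlarge, fromBlocks, hA]
    · simp only [alexMat, colEnlarge, fromBlocks_transpose, fromBlocks_map,
        fromBlocks_smul, Matrix.sub_apply, fromBlocks_apply₁₂, hB, Matrix.map_apply,
        Matrix.of_apply, Matrix.smul_apply, Matrix.transpose_apply, Matrix.zero_apply]
      split <;> simp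
    · simp only [alexMat, colEnlarge, fromBlocks_transpose, fromBlocks_map,
        fromBlocks_smul, Matrix.sub_apply, fromBlocks_apply₂₁, hC, Matrix.map_apply,
        Matrix.of_apply, Matrix.smul_apply, Matrix.transpose_apply, Matrix.zero_apply]
      split <;> simp
    · simp only [alexMat, colEnlarge, fromBlocks_transpose, fromBlocks_map,
        fromBlocks_smul, Matrix.sub_apply, fromBlocks_apply₂₂, hD]
      fin_cases i <;> fin_cases j <;>
        simp [Matrix.vecHead, Matrix.vecTail, Matrix.transpose_apply]
  set F : Matrix (Fin 2) (Fin n) (Polynomial ℤ) :=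
    Matrix.of fun i j => if i = 1 then Polynomial.X * Polynomial.C (b j) else 0 with hF
  set E := fromBlocks (1 : Matrix (Fin n) (Fin n) (Polynomial ℤ)) 0 F (1 : Matrix (Fin 2) (Fin 2) (Polynomial ℤ)) with hE
  have hEdet : E.det = 1 := by rw [hE, det_fromBlocks_zero₁₂]; simp
  have hmul : (fromBlocks A B' C' D') * E = fromBlocks A B' 0 D' := by
    rw [hE, fromBlocks_multiply]
    have h1 : B' * F = 0 := by
      refine Matrix.ext fun i j => ?_
      simp [mul_apply, Fin.sum_univ_two, hB, hF]
    have h2 : C' + D' * F = 0 := by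
      refine Matrix.ext fun i j => ?_
      fin_cases i <;>
        simp [mul_apply, Fin.sum_univ_two, hC, hD, hF, Matrix.vecHead, Matrix.vecTail]
    simp only [Matrix.mul_one, Matrix.mul_zero, h1, add_zero, zero_add, h2]
  have hdet : (alexMat (colEnlarge V b)).det * E.det = (fromBlocks A B' 0 D').det := by
    rw [← det_mul, hM, hmul]
  rw [hEdet, mul_one] at hdet
  rw [hdet, det_fromBlocks_zero₂₁]
  have hDdet : D'.det = Polynomial.X := by simp [hD, det_fin_two_of]
  rw [hDdet, mul_comm]

/-- For the column-type elementary enlargement `W` of `V`,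
`det(W − t·Wᵀ) = t·det(V − t·Vᵀ)`; in particular, for either type of elementary
enlargement of `V` the determinant is `±t·det(V − t·Vᵀ)`. -/
theorem det_alexMat_colEnlarge {n : ℕ} (V : Matrix (Fin n) (Fin n) ℤ)
    (a b : Fin n → ℤ) :
    (alexMat (colEnlarge V b)).det = Polynomial.X * (alexMat V).det ∧
    ((alexMat (colEnlarge V b)).det = Polynomial.X * (alexMat V).det ∨
      (alexMat (colEnlarge V b)).det = -(Polynomial.X * (alexMat V).det)) ∧
    ((alexMat (rowEnlarge V a)).det = Polynomial.X * (alexMat V).det ∨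
      (alexMat (rowEnlarge V a)).det = -(Polynomial.X * (alexMat V).det)) := by
  have hrow : (alexMat (rowEnlarge V a)).det = Polynomial.X * (alexMat V).det := by
    have h1 : rowEnlarge V a = (colEnlarge Vᵀ a)ᵀ := by
      refine Matrix.ext fun i j => ?_
      rcases i with i | i <;> rcases j with j | j
      · simp [rowEnlarge, colEnlarge, fromBlocks]
      · simp [rowEnlarge, colEnlarge, fromBlocks]
      · simp [rowEnlarge, colEnlarge, fromBlocks]
      · fin_cases i <;> fin_cases j <;> simp [rowEnlarge, colEnlarge]
    rw [h1, alexMat_transpose, det_transpose, key, alexMat_transpose, det_transpose]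
  exact ⟨key V b, Or.inl (key V b), Or.inl hrow⟩
end

section
/- Let V be an n × n integer matrix, a a 1 × n integer row vector, and W = [[V, 0, 0], [a, 0, 0], [0, 1, 0]] the row-type elementary enlargement of V. Then the signature of the real symmetric matrix W + Wᵀ equals the signature of V + Vᵀ, i.e. σ(W + Wᵀ) = σ(V + Vᵀ). -/
open Matrix

/-- The signature of a real symmetric (= Hermitian) matrix: the number of positive
eigenvalues minus the number of negative eigenvalues, counted with multiplicity.
(Defined to be `0` on non-symmetric matrices.) -/
noncomputable def signature {n : Type*} [Fintype n] [DecidableEq n]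
    (A : Matrix n n ℝ) : ℤ :=
  if hA : A.IsHermitian then
    ((Finset.univ.filter fun i => 0 < hA.eigenvalues i).card : ℤ) -
    ((Finset.univ.filter fun i => hA.eigenvalues i < 0).card : ℤ)
  else 0

section SylvesterInfra

open Finset Module

set_option linter.unusedSectionVars false

variable {m : Type*} [Fintype m] [DecidableEq m]

/-- `W` is a subspace on which the quadratic form of `A` takes values in `s` (off `0`). -/
def IsSubOn (A : Matrix m m ℝ) (s : Set ℝ) (W : Submodule ℝ (m → ℝ)) : Prop :=
  ∀ x ∈ W, x ≠ 0 → x ⬝ᵥ A *ᵥ x ∈ s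

/-- The coordinate subspace supported on a finite set `s` of indices. -/
def coordSub (s : Finset m) : Submodule ℝ (m → ℝ) where
  carrier := {x | ∀ i ∉ s, x i = 0}
  add_mem' hx hy i hi := by simp [hx i hi, hy i hi]
  zero_mem' := fun i _ => rfl
  smul_mem' c x hx i hi := by simp [hx i hi]

noncomputable def coordSubEquiv (s : Finset m) : coordSub s ≃ₗ[ℝ] (s → ℝ) where
  toFun x i := x.1 i
  map_add' x y := rfl
  map_smul' c x := rfl
  invFun y := ⟨fun i => if h : i ∈ s then y ⟨i, h⟩ else 0, by intro i hi; simp [hi]⟩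
  left_inv x := by
    ext i
    by_cases h : i ∈ s
    · simp [h]
    · simp [h, x.2 i h]
  right_inv y := by ext i; simp [i.2]

lemma finrank_coordSub (s : Finset m) : finrank ℝ (coordSub s) = s.card := by
  rw [(coordSubEquiv s).finrank_eq]
  simp [Module.finrank_pi]

lemma dim_bound {A : Matrix m m ℝ} {s t : Set ℝ} (hst : Disjoint s t)
    {W U : Submodule ℝ (m → ℝ)} (hW : IsSubOn A s W) (hU : IsSubOn A t U) :
    finrank ℝ W + finrank ℝ U ≤ Fintype.card m := by
  have hdisj : W ⊓ U = ⊥ := by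
    rw [Submodule.eq_bot_iff]
    intro x hx
    by_contra hne
    exact Set.disjoint_left.1 hst (hW x hx.1 hne) (hU x hx.2 hne)
  have h1 := Submodule.finrank_sup_add_finrank_inf_eq W U
  rw [hdisj] at h1
  simp only [finrank_bot, add_zero] at h1
  rw [← h1]
  have := Submodule.finrank_le (W ⊔ U)
  simpa [Module.finrank_pi] using this

noncomputable def mulVecEquiv (M : Matrix m m ℝ) (hM : IsUnit M.det) :
    (m → ℝ) ≃ₗ[ℝ] (m → ℝ) :=
  LinearEquiv.ofLinear (Matrix.mulVecLin M) (Matrix.mulVecLin M⁻¹)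
    (by rw [← Matrix.mulVecLin_mul, Matrix.mul_nonsing_inv _ hM, Matrix.mulVecLin_one])
    (by rw [← Matrix.mulVecLin_mul, Matrix.nonsing_inv_mul _ hM, Matrix.mulVecLin_one])

lemma isSubOn_congr {A M : Matrix m m ℝ} (hM : IsUnit M.det) {s : Set ℝ}
    {W : Submodule ℝ (m → ℝ)} (h : IsSubOn A s W) :
    ∃ W' : Submodule ℝ (m → ℝ), IsSubOn (M * A * Mᵀ) s W' ∧ finrank ℝ W' = finrank ℝ W := by
  have hMT : IsUnit (Mᵀ).det := by rwa [Matrix.det_transpose]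
  have hMTi : IsUnit ((Mᵀ)⁻¹).det := Matrix.isUnit_nonsing_inv_det _ hMT
  set e := mulVecEquiv ((Mᵀ)⁻¹) hMTi with he
  refine ⟨W.map e.toLinearMap, ?_, LinearEquiv.finrank_map_eq e W⟩
  rintro x hx hne
  rcases Submodule.mem_map.1 hx with ⟨y, hy, rfl⟩
  have hyne : y ≠ 0 := by rintro rfl; simp at hne
  have key : e y ᵥ* M = y := by
    rw [← Matrix.mulVec_transpose]
    show Mᵀ *ᵥ ((Mᵀ)⁻¹ *ᵥ y) = y
    rw [Matrix.mulVec_mulVec, Matrix.mul_nonsing_inv _ hMT, Matrix.one_mulVec]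
  have qeq : (e : (m → ℝ) →ₗ[ℝ] (m → ℝ)) y ⬝ᵥ (M * A * Mᵀ) *ᵥ (e : (m → ℝ) →ₗ[ℝ] (m → ℝ)) y
      = y ⬝ᵥ A *ᵥ y := by
    show (e y) ⬝ᵥ (M * A * Mᵀ) *ᵥ (e y) = y ⬝ᵥ A *ᵥ y
    rw [← Matrix.mulVec_mulVec, Matrix.mulVec_transpose, key, ← Matrix.mulVec_mulVec,
      Matrix.dotProduct_mulVec (e y) M, key]
  rw [qeq]
  exact h y hy hyne

lemma quad_diagonal (g x : m → ℝ) : x ⬝ᵥ (diagonal g) *ᵥ x = ∑ i, g i * x i ^ 2 := by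
  simp [dotProduct, Matrix.mulVec_diagonal]
  congr 1; ext i; ring

lemma isSubOn_diag_pos (g : m → ℝ) :
    IsSubOn (diagonal g) (Set.Ioi 0) (coordSub (univ.filter fun i => 0 < g i)) := by
  intro x hx hne
  rw [Set.mem_Ioi, quad_diagonal]
  obtain ⟨j, hj⟩ := Function.ne_iff.1 hne
  have hxj : x j ≠ 0 := by simpa using hj
  have hjmem : j ∈ univ.filter fun i => 0 < g i := by
    by_contra hc; exact hxj (hx j hc)
  have h1 : 0 < g j := (Finset.mem_filter.1 hjmem).2
  have h2 : 0 < x j ^ 2 := by positivity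
  refine Finset.sum_pos' (fun i _ => ?_) ⟨j, Finset.mem_univ j, mul_pos h1 h2⟩
  by_cases hi : i ∈ univ.filter fun k => 0 < g k
  · have : 0 < g i := (Finset.mem_filter.1 hi).2
    positivity
  · rw [hx i hi]; simp

lemma isSubOn_diag_nonpos (g : m → ℝ) :
    IsSubOn (diagonal g) (Set.Iic 0) (coordSub (univ.filter fun i => ¬ 0 < g i)) := by
  intro x hx hne
  rw [Set.mem_Iic, quad_diagonal]
  refine Finset.sum_nonpos fun i _ => ?_
  by_cases hi : i ∈ univ.filter fun k => ¬ 0 < g k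
  · have : g i ≤ 0 := le_of_not_gt (Finset.mem_filter.1 hi).2
    have h2 : (0:ℝ) ≤ x i ^ 2 := sq_nonneg _
    exact mul_nonpos_of_nonpos_of_nonneg this h2
  · rw [hx i hi]; simp

lemma isSubOn_diag_neg (g : m → ℝ) :
    IsSubOn (diagonal g) (Set.Iio 0) (coordSub (univ.filter fun i => g i < 0)) := by
  intro x hx hne
  rw [Set.mem_Iio, quad_diagonal]
  obtain ⟨j, hj⟩ := Function.ne_iff.1 hne
  have hxj : x j ≠ 0 := by simpa using hj
  have hjmem : j ∈ univ.filter fun i => g i < 0 := by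
    by_contra hc; exact hxj (hx j hc)
  have h1 : g j < 0 := (Finset.mem_filter.1 hjmem).2
  have h2 : 0 < x j ^ 2 := by positivity
  have key : 0 < ∑ i, -(g i * x i ^ 2) := by
    refine Finset.sum_pos' (fun i _ => ?_) ⟨j, Finset.mem_univ j, by nlinarith⟩
    by_cases hi : i ∈ univ.filter fun k => g k < 0
    · have : g i < 0 := (Finset.mem_filter.1 hi).2
      nlinarith [sq_nonneg (x i)]
    · rw [hx i hi]; simp
  rw [Finset.sum_neg_distrib] at key
  linarith

lemma isSubOn_diag_nonneg (g : m → ℝ) :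
    IsSubOn (diagonal g) (Set.Ici 0) (coordSub (univ.filter fun i => ¬ g i < 0)) := by
  intro x hx hne
  rw [Set.mem_Ici, quad_diagonal]
  refine Finset.sum_nonneg fun i _ => ?_
  by_cases hi : i ∈ univ.filter fun k => ¬ g k < 0
  · have : 0 ≤ g i := le_of_not_gt (Finset.mem_filter.1 hi).2
    positivity
  · rw [hx i hi]; simp

lemma spectral_real {A : Matrix m m ℝ} (hA : A.IsHermitian) :
    A = (hA.eigenvectorUnitary : Matrix m m ℝ) * diagonal hA.eigenvalues
      * (hA.eigenvectorUnitary : Matrix m m ℝ)ᵀ := by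
  conv_lhs => rw [hA.spectral_theorem]
  rw [RCLike.ofReal_real_eq_id, Function.id_comp, Unitary.conjStarAlgAut_apply,
    Matrix.star_eq_conjTranspose, Matrix.conjTranspose_eq_transpose_of_trivial]

lemma eigUnit_det {A : Matrix m m ℝ} (hA : A.IsHermitian) :
    IsUnit (hA.eigenvectorUnitary : Matrix m m ℝ).det := by
  have := Unitary.star_mul_self_of_mem (hA.eigenvectorUnitary).2
  have hd := congrArg Matrix.det this
  rw [Matrix.det_mul, Matrix.det_one, mul_comm] at hd
  exact IsUnit.of_mul_eq_one _ hd

/-- Four subspaces attached to a congruence-diagonalization of `A`. -/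
lemma four_subs {A M : Matrix m m ℝ} {g : m → ℝ} (hM : IsUnit M.det)
    (hdec : A = M * diagonal g * Mᵀ) :
    (∃ W, IsSubOn A (Set.Ioi 0) W ∧ finrank ℝ W = (univ.filter fun i => 0 < g i).card) ∧
    (∃ U, IsSubOn A (Set.Iic 0) U ∧ finrank ℝ U = (univ.filter fun i => ¬ 0 < g i).card) ∧
    (∃ W, IsSubOn A (Set.Iio 0) W ∧ finrank ℝ W = (univ.filter fun i => g i < 0).card) ∧
    (∃ U, IsSubOn A (Set.Ici 0) U ∧ finrank ℝ U = (univ.filter fun i => ¬ g i < 0).card) := by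
  subst hdec
  refine ⟨?_, ?_, ?_, ?_⟩
  · obtain ⟨W', h1, h2⟩ := isSubOn_congr hM (isSubOn_diag_pos g)
    exact ⟨W', h1, h2.trans (finrank_coordSub _)⟩
  · obtain ⟨W', h1, h2⟩ := isSubOn_congr hM (isSubOn_diag_nonpos g)
    exact ⟨W', h1, h2.trans (finrank_coordSub _)⟩
  · obtain ⟨W', h1, h2⟩ := isSubOn_congr hM (isSubOn_diag_neg g)
    exact ⟨W', h1, h2.trans (finrank_coordSub _)⟩
  · obtain ⟨W', h1, h2⟩ := isSubOn_congr hM (isSubOn_diag_nonneg g)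
    exact ⟨W', h1, h2.trans (finrank_coordSub _)⟩

/-- Sylvester's law of inertia (counting form): if `A = M (diagonal g) Mᵀ` with `M`
invertible, then the eigenvalue sign counts of `A` agree with the sign counts of `g`. -/
lemma count_eq {A : Matrix m m ℝ} (hA : A.IsHermitian) {M : Matrix m m ℝ} {g : m → ℝ}
    (hM : IsUnit M.det) (hdec : A = M * diagonal g * Mᵀ) :
    (univ.filter fun i => 0 < hA.eigenvalues i).card = (univ.filter fun i => 0 < g i).card ∧
    (univ.filter fun i => hA.eigenvalues i < 0).card = (univ.filter fun i => g i < 0).card := by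
  obtain ⟨⟨W1, hW1, r1⟩, ⟨U1, hU1, s1⟩, ⟨W2, hW2, r2⟩, ⟨U2, hU2, s2⟩⟩ := four_subs hM hdec
  obtain ⟨⟨W1', hW1', r1'⟩, ⟨U1', hU1', s1'⟩, ⟨W2', hW2', r2'⟩, ⟨U2', hU2', s2'⟩⟩ :=
    four_subs (eigUnit_det hA) (spectral_real hA)
  have c1 := (Finset.card_filter_add_card_filter_not
    (s := (univ : Finset m)) (p := fun i => 0 < g i)).trans (Finset.card_univ)
  have c2 := (Finset.card_filter_add_card_filter_not
    (s := (univ : Finset m)) (p := fun i => g i < 0)).trans (Finset.card_univ)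
  have c1' := (Finset.card_filter_add_card_filter_not
    (s := (univ : Finset m)) (p := fun i => 0 < hA.eigenvalues i)).trans (Finset.card_univ)
  have c2' := (Finset.card_filter_add_card_filter_not
    (s := (univ : Finset m)) (p := fun i => hA.eigenvalues i < 0)).trans (Finset.card_univ)
  have hd1 : Disjoint (Set.Ioi (0:ℝ)) (Set.Iic 0) := (Set.Iic_disjoint_Ioi le_rfl).symm
  have hd2 : Disjoint (Set.Iio (0:ℝ)) (Set.Ici 0) := Set.Iio_disjoint_Ici le_rfl
  have b1 := dim_bound hd1 hW1 hU1'
  have b2 := dim_bound hd1 hW1' hU1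
  have b3 := dim_bound hd2 hW2 hU2'
  have b4 := dim_bound hd2 hW2' hU2
  constructor <;> omega

end SylvesterInfra

section Assembly

open Finset Module

set_option linter.unusedSectionVars false

lemma herm_sym {k : Type*} [Fintype k] [DecidableEq k] (X : Matrix k k ℤ) :
    ((X + Xᵀ).map (Int.cast : ℤ → ℝ)).IsHermitian := by
  rw [Matrix.IsHermitian, conjTranspose_eq_transpose_of_trivial, ← Matrix.transpose_map,
    transpose_add, transpose_transpose, add_comm]

lemma card_filter_sum {n : ℕ} (p : Fin n ⊕ Fin 2 → Prop) [DecidablePred p] :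
    (univ.filter p).card = (univ.filter fun i => p (Sum.inl i)).card
      + (univ.filter fun i => p (Sum.inr i)).card := by
  rw [Finset.card_filter, Finset.card_filter, Finset.card_filter, Fintype.sum_sum_type]

lemma diag2 : (diagonal ![1,-1] : Matrix (Fin 2) (Fin 2) ℝ) = !![1,0;0,-1] := by
  ext i j
  fin_cases i <;> fin_cases j <;> simp [Matrix.diagonal]

lemma Gconj : ((Real.sqrt 2)⁻¹ • !![1,1;1,-1] : Matrix (Fin 2) (Fin 2) ℝ)
    * diagonal ![1,-1] * ((Real.sqrt 2)⁻¹ • !![1,1;1,-1] : Matrix (Fin 2) (Fin 2) ℝ)ᵀ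
    = !![0,1;1,0] := by
  have hs : (Real.sqrt 2)⁻¹ * (Real.sqrt 2)⁻¹ = 1/2 := by
    rw [← mul_inv, Real.mul_self_sqrt (by norm_num)]
    norm_num
  rw [transpose_smul, Matrix.smul_mul, Matrix.mul_smul, Matrix.smul_mul, smul_smul, hs, diag2]
  have : (!![1,1;1,-1] : Matrix (Fin 2) (Fin 2) ℝ) * !![1,0;0,-1] * !![1,1;1,-1]ᵀ
      = !![0,2;2,0] := by
    ext i j
    fin_cases i <;> fin_cases j <;>
      simp [Matrix.mul_apply, Fin.sum_univ_two, Matrix.transpose_apply, Matrix.vecHead,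
        Matrix.vecTail] <;> norm_num
  rw [this]
  ext i j
  fin_cases i <;> fin_cases j <;> simp <;> norm_num

variable {n : ℕ} (V : Matrix (Fin n) (Fin n) ℤ) (a : Fin n → ℤ)

noncomputable abbrev Breal : Matrix (Fin n) (Fin n) ℝ := (V + Vᵀ).map (Int.cast : ℤ → ℝ)
noncomputable abbrev Trm : Matrix (Fin n) (Fin 2) ℝ :=
  Matrix.of fun j i => if i = 0 then (a j : ℝ) else 0
noncomputable abbrev Blm : Matrix (Fin 2) (Fin n) ℝ :=
  Matrix.of fun i j => if i = 0 then (a j : ℝ) else 0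
noncomputable abbrev H0 : Matrix (Fin 2) (Fin 2) ℝ := !![0,1;1,0]
noncomputable abbrev Cm : Matrix (Fin n) (Fin 2) ℝ :=
  Matrix.of fun j i => if i = 1 then (a j : ℝ) else 0
noncomputable abbrev Em : Matrix (Fin n ⊕ Fin 2) (Fin n ⊕ Fin 2) ℝ :=
  fromBlocks 1 (Cm a) 0 1

lemma S_blocks : (rowEnlarge V a + (rowEnlarge V a)ᵀ).map (Int.cast : ℤ → ℝ)
    = fromBlocks (Breal V) (Trm a) (Blm a) H0 := by
  rw [rowEnlarge, fromBlocks_transpose, fromBlocks_add, fromBlocks_map,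
    Matrix.fromBlocks_inj]
  refine ⟨rfl, ?_, ?_, ?_⟩
  · ext j i
    fin_cases i <;> simp
  · ext i j
    fin_cases i <;> simp
  · ext i j
    fin_cases i <;> fin_cases j <;> simp [Matrix.vecHead, Matrix.vecTail]

lemma E_conj : Em a * fromBlocks (Breal V) 0 0 H0 * (Em a)ᵀ
    = fromBlocks (Breal V) (Trm a) (Blm a) H0 := by
  rw [Em, fromBlocks_transpose, fromBlocks_multiply, fromBlocks_multiply,
    Matrix.transpose_one, Matrix.transpose_zero]
  simp only [Matrix.transpose_one, Matrix.transpose_zero, Matrix.mul_one, Matrix.one_mul,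
    Matrix.mul_zero, Matrix.zero_mul, add_zero, zero_add]
  rw [Matrix.fromBlocks_inj]
  refine ⟨?_, ?_, ?_, rfl⟩
  · have h0 : Cm a * H0 * (Cm a)ᵀ = 0 := by
      ext j k
      simp [Matrix.mul_apply, Fin.sum_univ_two, Matrix.vecHead, Matrix.vecTail]
    rw [h0, add_zero]
  · ext j i
    fin_cases i <;> simp [Matrix.mul_apply, Fin.sum_univ_two, Matrix.vecHead, Matrix.vecTail]
  · ext i j
    fin_cases i <;> simp [Matrix.mul_apply, Fin.sum_univ_two, Matrix.vecHead, Matrix.vecTail]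

end Assembly

/-- For the row-type elementary enlargement `W` of `V`, the signatures of the (real)
symmetrizations agree: `σ(W + Wᵀ) = σ(V + Vᵀ)`. -/
theorem signature_rowEnlarge {n : ℕ} (V : Matrix (Fin n) (Fin n) ℤ) (a : Fin n → ℤ) :
    signature ((rowEnlarge V a + (rowEnlarge V a)ᵀ).map (Int.cast : ℤ → ℝ))
      = signature ((V + Vᵀ).map (Int.cast : ℤ → ℝ)) := by
  classical
  have hB : ((V + Vᵀ).map (Int.cast : ℤ → ℝ)).IsHermitian := herm_sym V
  have hS : ((rowEnlarge V a + (rowEnlarge V a)ᵀ).map (Int.cast : ℤ → ℝ)).IsHermitian := by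
    have := herm_sym (rowEnlarge V a)
    exact this
  set B := (V + Vᵀ).map (Int.cast : ℤ → ℝ) with hBdef
  set S := (rowEnlarge V a + (rowEnlarge V a)ᵀ).map (Int.cast : ℤ → ℝ) with hSdef
  set U := (hB.eigenvectorUnitary : Matrix (Fin n) (Fin n) ℝ) with hU
  set μ := hB.eigenvalues with hμ
  set G : Matrix (Fin 2) (Fin 2) ℝ := (Real.sqrt 2)⁻¹ • !![1,1;1,-1] with hG
  set F : Matrix (Fin n ⊕ Fin 2) (Fin n ⊕ Fin 2) ℝ := fromBlocks U 0 0 G with hF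
  set M : Matrix (Fin n ⊕ Fin 2) (Fin n ⊕ Fin 2) ℝ := Em a * F with hM
  set g : Fin n ⊕ Fin 2 → ℝ := Sum.elim μ ![1,-1] with hg
  -- the congruence decomposition of S
  have hFconj : F * diagonal g * Fᵀ = fromBlocks B 0 0 H0 := by
    rw [hg, ← fromBlocks_diagonal, hF, fromBlocks_transpose, fromBlocks_multiply,
      fromBlocks_multiply]
    simp only [Matrix.transpose_zero, Matrix.mul_zero, Matrix.zero_mul, add_zero, zero_add,
      Matrix.mul_one, Matrix.one_mul]
    rw [Matrix.fromBlocks_inj]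
    exact ⟨(spectral_real hB).symm, rfl, rfl, Gconj⟩
  have hdec : S = M * diagonal g * Mᵀ := by
    rw [hM, Matrix.transpose_mul,
      show Em a * F * diagonal g * (Fᵀ * (Em a)ᵀ)
        = Em a * (F * diagonal g * Fᵀ) * (Em a)ᵀ from by
          simp only [Matrix.mul_assoc],
      hFconj, hBdef, E_conj V a, hSdef, S_blocks]
  have hMdet : IsUnit M.det := by
    rw [hM, Matrix.det_mul, Em, Matrix.det_fromBlocks_zero₂₁, hF,
      Matrix.det_fromBlocks_zero₂₁, Matrix.det_one, Matrix.det_one, one_mul, one_mul]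
    have hGdet : G.det = -1 := by
      rw [hG, Matrix.det_smul, Matrix.det_fin_two_of]
      have hs : ((Real.sqrt 2)⁻¹ : ℝ) ^ (Fintype.card (Fin 2)) = 1/2 := by
        rw [Fintype.card_fin, sq, ← mul_inv, Real.mul_self_sqrt (by norm_num)]
        norm_num
      rw [hs]
      norm_num
    rw [hGdet]
    exact (eigUnit_det hB).mul (by norm_num)
  obtain ⟨hp, hq⟩ := count_eq hS hMdet hdec
  -- counting over the sum type
  have hps : (Finset.univ.filter fun i => 0 < g i).card
      = (Finset.univ.filter fun i => 0 < μ i).card + 1 := by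
    rw [card_filter_sum]
    congr 1
    have h2 : ∀ b : Fin 2, (0 < g (Sum.inr b)) ↔ b = 0 := by
      intro b; fin_cases b <;> simp [hg] <;> norm_num
    rw [Finset.filter_congr (fun b _ => h2 b)]
    simp [Finset.filter_eq']
  have hqs : (Finset.univ.filter fun i => g i < 0).card
      = (Finset.univ.filter fun i => μ i < 0).card + 1 := by
    rw [card_filter_sum]
    congr 1
    have h2 : ∀ b : Fin 2, (g (Sum.inr b) < 0) ↔ b = 1 := by
      intro b; fin_cases b <;> simp [hg] <;> norm_num
    rw [Finset.filter_congr (fun b _ => h2 b)]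
    simp [Finset.filter_eq']
  rw [signature, signature, dif_pos hS, dif_pos hB]
  rw [hp, hq, hps, hqs]
  push_cast
  ring
end
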